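/- For all integers n ≥ 2 and k ≥ 0, the group homomorphism J_n → J_{n+k} defined on generators by s_{p,q} ↦ s_{p,q} is injective. -/

import Mathlib

/-- The set of intervals `[p,q]`, `1 ≤ p < q ≤ n`, indexing the generators `s_{p,q}`
of the cactus group `J_n`. -/
def cactusSet (n : ℕ) : Set (ℕ × ℕ) := {pq | 1 ≤ pq.1 ∧ pq.1 < pq.2 ∧ pq.2 ≤ n}

/-- The defining relations (j1)-(j3) of the cactus group, restricted to a collection `C`
of generating intervals: exactly those cactus relations involving only generators from `C`. -/
def cactusRels (C : Set (ℕ × ℕ)) : Set (FreeGroup C) :=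
  {w | (∃ a : C, w = FreeGroup.of a * FreeGroup.of a) ∨
    (∃ a b : C, (a.1.2 < b.1.1 ∨ b.1.2 < a.1.1) ∧
      w = FreeGroup.of a * FreeGroup.of b * (FreeGroup.of a)⁻¹ * (FreeGroup.of b)⁻¹) ∨
    (∃ a b c : C, a.1.1 ≤ b.1.1 ∧ b.1.2 ≤ a.1.2 ∧
      c.1.1 = a.1.1 + a.1.2 - b.1.2 ∧ c.1.2 = a.1.1 + a.1.2 - b.1.1 ∧
      w = FreeGroup.of a * FreeGroup.of b * (FreeGroup.of a)⁻¹ * (FreeGroup.of c)⁻¹)}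

/-- The group presented by the generators `s_I`, `I ∈ C`, and those cactus relations
involving only these generators. -/
abbrev PartialCactusGroup (C : Set (ℕ × ℕ)) := PresentedGroup (cactusRels C)

/-- The cactus group `J_n`. -/
abbrev CactusGroup (n : ℕ) := PartialCactusGroup (cactusSet n)


lemma cactusSet_mono {n m : ℕ} (h : n ≤ m) : cactusSet n ⊆ cactusSet m :=
  fun _ hpq => ⟨hpq.1, hpq.2.1, hpq.2.2.trans h⟩

namespace CactusAux

lemma relator_one {C : Set (ℕ × ℕ)} {w : FreeGroup C} (hw : w ∈ cactusRels C) :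
    (PresentedGroup.mk (cactusRels C) w : PartialCactusGroup C) = 1 :=
  (QuotientGroup.eq_one_iff _).2 (Subgroup.subset_normalClosure hw)

lemma rel1 {C : Set (ℕ × ℕ)} (a : C) :
    (PresentedGroup.of a : PartialCactusGroup C) * PresentedGroup.of a = 1 := by
  have := relator_one (C := C) (Or.inl ⟨a, rfl⟩)
  rw [map_mul] at this
  exact this

lemma rel2 {C : Set (ℕ × ℕ)} (a b : C) (hd : a.1.2 < b.1.1 ∨ b.1.2 < a.1.1) :
    (PresentedGroup.of a : PartialCactusGroup C) * PresentedGroup.of b =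
      PresentedGroup.of b * PresentedGroup.of a := by
  have := relator_one (C := C) (Or.inr (Or.inl ⟨a, b, hd, rfl⟩))
  simp only [map_mul, map_inv] at this
  rw [mul_inv_eq_one, mul_inv_eq_iff_eq_mul] at this
  exact this

lemma rel3 {C : Set (ℕ × ℕ)} (a b c : C) (hab : a.1.1 ≤ b.1.1) (hba : b.1.2 ≤ a.1.2)
    (hc1 : c.1.1 = a.1.1 + a.1.2 - b.1.2) (hc2 : c.1.2 = a.1.1 + a.1.2 - b.1.1) :
    (PresentedGroup.of a : PartialCactusGroup C) * PresentedGroup.of b =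
      PresentedGroup.of c * PresentedGroup.of a := by
  have := relator_one (C := C) (Or.inr (Or.inr ⟨a, b, c, hab, hba, hc1, hc2, rfl⟩))
  simp only [map_mul, map_inv] at this
  rw [mul_inv_eq_one, mul_inv_eq_iff_eq_mul] at this
  exact this

lemma inv_of {C : Set (ℕ × ℕ)} (a : C) :
    (PresentedGroup.of a : PartialCactusGroup C)⁻¹ = PresentedGroup.of a :=
  inv_eq_of_mul_eq_one_right (rel1 a)



/-- reversal of the interval `[p,q]` on `ℕ`. -/
def crev (p q x : ℕ) : ℕ := if p ≤ x ∧ x ≤ q then p + q - x else x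

lemma crev_invol (p q x : ℕ) : crev p q (crev p q x) = x := by
  unfold crev; split_ifs <;> omega

lemma crev_inj (p q : ℕ) : Function.Injective (crev p q) :=
  Function.Involutive.injective (crev_invol p q)

/-- number of elements of `R` that are `≤ t`. -/
def cnt (R : Finset ℕ) (t : ℕ) : ℕ := (R.filter (fun x => x ≤ t)).card

lemma cnt_mono (R : Finset ℕ) {t t' : ℕ} (h : t ≤ t') : cnt R t ≤ cnt R t' :=
  Finset.card_le_card (Finset.monotone_filter_right R (fun x _ hx => le_trans hx h))

lemma cnt_le_card (R : Finset ℕ) (t : ℕ) : cnt R t ≤ R.card :=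
  Finset.card_filter_le _ _

def crevSet (p q : ℕ) (R : Finset ℕ) : Finset ℕ := R.image (crev p q)

lemma crevSet_card (p q : ℕ) (R : Finset ℕ) : (crevSet p q R).card = R.card :=
  Finset.card_image_of_injective _ (crev_inj p q)

lemma crevSet_invol (p q : ℕ) (R : Finset ℕ) : crevSet p q (crevSet p q R) = R := by
  unfold crevSet
  rw [Finset.image_image]
  have : crev p q ∘ crev p q = id := funext (crev_invol p q)
  rw [this, Finset.image_id]

lemma cnt_crevSet (p q t : ℕ) (R : Finset ℕ) :
    cnt (crevSet p q R) t = (R.filter (fun x => crev p q x ≤ t)).card := by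
  unfold cnt crevSet
  rw [Finset.filter_image]
  exact Finset.card_image_of_injective _ (crev_inj p q)

lemma cnt_crevSet_low {p q t : ℕ} (h : t < p ∨ q ≤ t) (R : Finset ℕ) :
    cnt (crevSet p q R) t = cnt R t := by
  rw [cnt_crevSet]
  unfold cnt
  congr 1
  apply Finset.filter_congr
  intro x _
  unfold crev
  split_ifs <;> omega

lemma cnt_crevSet_mid {p s q : ℕ} (h1 : 1 ≤ p) (h2 : p ≤ s) (h3 : s ≤ q + 1) (R : Finset ℕ) :
    cnt (crevSet p q R) (p + q - s) + cnt R (s - 1) = cnt R (p - 1) + cnt R q := by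
  rw [cnt_crevSet]
  unfold cnt
  have hu : R.filter (fun x => crev p q x ≤ p + q - s) ∪ R.filter (fun x => x ≤ s - 1)
      = R.filter (fun x => x ≤ q) := by
    ext x
    by_cases hx : x ∈ R <;> simp only [Finset.mem_union, Finset.mem_filter] <;> simp [hx, crev]
    split_ifs <;> omega
  have hi : R.filter (fun x => crev p q x ≤ p + q - s) ∩ R.filter (fun x => x ≤ s - 1)
      = R.filter (fun x => x ≤ p - 1) := by
    ext x
    by_cases hx : x ∈ R <;> simp only [Finset.mem_inter, Finset.mem_filter] <;> simp [hx, crev]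
    split_ifs <;> omega
  have := Finset.card_union_add_card_inter (R.filter (fun x => crev p q x ≤ p + q - s))
    (R.filter (fun x => x ≤ s - 1))
  rw [hu, hi] at this
  omega



/-- the state space on which `J_{n+k}` acts. -/
def JState (n : ℕ) := {R : Finset ℕ // R.card ≤ n} × CactusGroup n

/-- generator of `J_n` with interval `(A+1, B)`, or `1` if degenerate. -/
def mkgen (n A B : ℕ) : CactusGroup n :=
  if h : A + 1 < B ∧ B ≤ n then
    PresentedGroup.of ⟨(A + 1, B), ⟨Nat.le_add_left 1 _, h.1, h.2⟩⟩
  else 1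

lemma mkgen_eq {n A B : ℕ} (h1 : A + 1 < B) (h2 : B ≤ n) :
    mkgen n A B = PresentedGroup.of ⟨(A + 1, B), ⟨Nat.le_add_left 1 _, h1, h2⟩⟩ :=
  dif_pos ⟨h1, h2⟩

lemma mkgen_one {n A B : ℕ} (h : ¬ A + 1 < B) : mkgen n A B = 1 :=
  dif_neg (fun hc => h hc.1)

/-- the `J_n`-generator induced on the real strands by the interval `[p,q]`. -/
def celt (n p q : ℕ) (R : Finset ℕ) : CactusGroup n :=
  mkgen n (cnt R (p - 1)) (cnt R q)

lemma celt_crevSet_eq {n m r p q : ℕ} (h1 : p - 1 < m ∨ r ≤ p - 1) (h2 : q < m ∨ r ≤ q)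
    (R : Finset ℕ) : celt n p q (crevSet m r R) = celt n p q R := by
  unfold celt
  rw [cnt_crevSet_low (t := p - 1) h1, cnt_crevSet_low (t := q) h2]

/-- action of the generator `s_{p,q}` on states. -/
def genFun (n p q : ℕ) (x : JState n) : JState n :=
  (⟨crevSet p q x.1.1, by rw [crevSet_card]; exact x.1.2⟩, celt n p q x.1.1 * x.2)

lemma celt_sq (n p q : ℕ) (R : Finset ℕ) : celt n p q R * celt n p q R = 1 := by
  unfold celt mkgen
  split_ifs with h
  · exact rel1 _
  · simp

lemma genFun_invol {p : ℕ} (h1p : 1 ≤ p) (n q : ℕ) (x : JState n) :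
    genFun n p q (genFun n p q x) = x := by
  unfold genFun
  refine Prod.ext (Subtype.ext ?_) ?_
  · exact crevSet_invol p q x.1.1
  · show celt n p q (crevSet p q x.1.1) * (celt n p q x.1.1 * x.2) = x.2
    rw [celt_crevSet_eq (by omega) (Or.inr le_rfl), ← mul_assoc, celt_sq, one_mul]

lemma crev_comm {p q m r : ℕ} (hd : q < m ∨ r < p) (y : ℕ) :
    crev p q (crev m r y) = crev m r (crev p q y) := by
  unfold crev; split_ifs <;> omega

lemma crevSet_comm {p q m r : ℕ} (hd : q < m ∨ r < p) (R : Finset ℕ) :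
    crevSet p q (crevSet m r R) = crevSet m r (crevSet p q R) := by
  unfold crevSet
  rw [Finset.image_image, Finset.image_image]
  exact Finset.image_congr (fun y _ => crev_comm hd y)

lemma celt_comm {n p q m r : ℕ} (hpq : p ≤ q) (hmr : m ≤ r) (hd : q < m ∨ r < p)
    (R : Finset ℕ) : celt n p q R * celt n m r R = celt n m r R * celt n p q R := by
  unfold celt mkgen
  split_ifs with h h' h' <;> try simp
  all_goals {
    rcases hd with hd | hd
    · exact rel2 _ _ (Or.inl
        (Nat.lt_succ_of_le (cnt_mono (t := q) (t' := m - 1) R (by omega))))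
    · exact rel2 _ _ (Or.inr
        (Nat.lt_succ_of_le (cnt_mono (t := r) (t' := p - 1) R (by omega)))) }

lemma genFun_comm {p q m r : ℕ} (hpq : p ≤ q) (hmr : m ≤ r) (hd : q < m ∨ r < p)
    (n : ℕ) (x : JState n) :
    genFun n p q (genFun n m r x) = genFun n m r (genFun n p q x) := by
  unfold genFun
  refine Prod.ext (Subtype.ext ?_) ?_
  · exact crevSet_comm hd x.1.1
  · show celt n p q (crevSet m r x.1.1) * (celt n m r x.1.1 * x.2)
      = celt n m r (crevSet p q x.1.1) * (celt n p q x.1.1 * x.2)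
    rw [celt_crevSet_eq (by omega) (by omega), celt_crevSet_eq (by omega) (by omega),
      ← mul_assoc, ← mul_assoc, celt_comm hpq hmr hd]

lemma crev_nest {p q m r : ℕ} (h1p : 1 ≤ p) (hpm : p ≤ m) (hmr : m ≤ r) (hrq : r ≤ q) (y : ℕ) :
    crev p q (crev m r y) = crev (p + q - r) (p + q - m) (crev p q y) := by
  unfold crev; split_ifs <;> omega

lemma crevSet_nest {p q m r : ℕ} (h1p : 1 ≤ p) (hpm : p ≤ m) (hmr : m ≤ r) (hrq : r ≤ q)
    (R : Finset ℕ) :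
    crevSet p q (crevSet m r R) = crevSet (p + q - r) (p + q - m) (crevSet p q R) := by
  unfold crevSet
  rw [Finset.image_image, Finset.image_image]
  exact Finset.image_congr (fun y _ => crev_nest h1p hpm hmr hrq y)

lemma celt_nest {p q m r : ℕ} (h1p : 1 ≤ p) (hpm : p ≤ m) (hmr : m < r) (hrq : r ≤ q)
    {n : ℕ} (R : Finset ℕ) (hR : R.card ≤ n) :
    celt n p q R * celt n m r R
      = celt n (p + q - r) (p + q - m) (crevSet p q R) * celt n p q R := by
  have hAM : cnt R (p - 1) ≤ cnt R (m - 1) := cnt_mono R (by omega)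
  have hMR : cnt R (m - 1) ≤ cnt R r := cnt_mono R (by omega)
  have hRB : cnt R r ≤ cnt R q := cnt_mono R (by omega)
  have hBn : cnt R q ≤ n := le_trans (cnt_le_card R q) hR
  have key1 := cnt_crevSet_mid (p := p) (s := r + 1) (q := q) h1p (by omega) (by omega) R
  rw [Nat.add_sub_cancel] at key1
  have key2 := cnt_crevSet_mid (p := p) (s := m) (q := q) h1p hpm (by omega) R
  unfold celt
  rw [show p + q - r - 1 = p + q - (r + 1) from by omega]
  set A := cnt R (p - 1) with hA
  set B := cnt R q with hB
  set M := cnt R (m - 1) with hM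
  set Rr := cnt R r with hRr
  set C1 := cnt (crevSet p q R) (p + q - (r + 1)) with hC1
  set C2 := cnt (crevSet p q R) (p + q - m) with hC2
  by_cases hMRr : M + 1 < Rr
  · rw [mkgen_eq (n := n) (A := A) (B := B) (by omega) (by omega),
      mkgen_eq (n := n) (A := M) (B := Rr) (by omega) (by omega),
      mkgen_eq (n := n) (A := C1) (B := C2) (by omega) (by omega)]
    exact rel3 _ _ _ (by show A + 1 ≤ M + 1; omega) (by show Rr ≤ B; omega)
      (by show C1 + 1 = (A + 1) + B - Rr; omega) (by show C2 = (A + 1) + B - (M + 1); omega)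
  · rw [mkgen_one (n := n) (A := M) (B := Rr) hMRr,
      mkgen_one (n := n) (A := C1) (B := C2) (by omega)]
    rw [mul_one, one_mul]

lemma genFun_nest {p q m r : ℕ} (h1p : 1 ≤ p) (hpm : p ≤ m) (hmr : m < r) (hrq : r ≤ q)
    (n : ℕ) (x : JState n) :
    genFun n p q (genFun n m r x) = genFun n (p + q - r) (p + q - m) (genFun n p q x) := by
  unfold genFun
  refine Prod.ext (Subtype.ext ?_) ?_
  · exact crevSet_nest h1p hpm (le_of_lt hmr) hrq x.1.1
  · show celt n p q (crevSet m r x.1.1) * (celt n m r x.1.1 * x.2)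
      = celt n (p + q - r) (p + q - m) (crevSet p q x.1.1) * (celt n p q x.1.1 * x.2)
    rw [celt_crevSet_eq (by omega) (by omega), ← mul_assoc, ← mul_assoc,
      celt_nest h1p hpm hmr hrq x.1.1 x.1.2]



def genPerm (n p q : ℕ) (h1p : 1 ≤ p) : Equiv.Perm (JState n) :=
  ⟨genFun n p q, genFun n p q, genFun_invol h1p n q, genFun_invol h1p n q⟩

lemma genPerm_inv (n p q : ℕ) (h1p : 1 ≤ p) : (genPerm n p q h1p)⁻¹ = genPerm n p q h1p := rfl

lemma actionHom_rels (n k : ℕ) :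
    ∀ r ∈ cactusRels (cactusSet (n + k)),
      FreeGroup.lift (fun a : cactusSet (n + k) => genPerm n a.1.1 a.1.2 a.2.1) r = 1 := by
  rintro r (⟨a, rfl⟩ | ⟨a, b, hd, rfl⟩ | ⟨a, b, c, h1, h2, h3, h4, rfl⟩) <;>
    simp only [map_mul, map_inv, FreeGroup.lift_apply_of]
  · refine Equiv.ext fun x => ?_
    show genFun n a.1.1 a.1.2 (genFun n a.1.1 a.1.2 x) = x
    exact genFun_invol a.2.1 n a.1.2 x
  · rw [mul_inv_eq_one, mul_inv_eq_iff_eq_mul]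
    refine Equiv.ext fun x => ?_
    show genFun n a.1.1 a.1.2 (genFun n b.1.1 b.1.2 x)
      = genFun n b.1.1 b.1.2 (genFun n a.1.1 a.1.2 x)
    exact genFun_comm (le_of_lt a.2.2.1) (le_of_lt b.2.2.1) hd n x
  · rw [mul_inv_eq_one, mul_inv_eq_iff_eq_mul]
    refine Equiv.ext fun x => ?_
    show genFun n a.1.1 a.1.2 (genFun n b.1.1 b.1.2 x)
      = genFun n c.1.1 c.1.2 (genFun n a.1.1 a.1.2 x)
    rw [h3, h4]
    exact genFun_nest a.2.1 h1 b.2.2.1 h2 n x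

def actionHom (n k : ℕ) : CactusGroup (n + k) →* Equiv.Perm (JState n) :=
  PresentedGroup.toGroup (actionHom_rels n k)

lemma phi_rels (n k : ℕ) :
    ∀ r ∈ cactusRels (cactusSet n),
      FreeGroup.lift (fun a : cactusSet n =>
        (PresentedGroup.of ⟨a.1, cactusSet_mono (Nat.le_add_right n k) a.2⟩ :
          CactusGroup (n + k))) r = 1 := by
  rintro r (⟨a, rfl⟩ | ⟨a, b, hd, rfl⟩ | ⟨a, b, c, h1, h2, h3, h4, rfl⟩) <;>
    simp only [map_mul, map_inv, FreeGroup.lift_apply_of]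
  · exact rel1 _
  · rw [mul_inv_eq_one, mul_inv_eq_iff_eq_mul]
    exact rel2 _ _ hd
  · rw [mul_inv_eq_one, mul_inv_eq_iff_eq_mul]
    exact rel3 _ _ _ h1 h2 h3 h4

def phiHom (n k : ℕ) : CactusGroup n →* CactusGroup (n + k) :=
  PresentedGroup.toGroup (phi_rels n k)

def R0 (n : ℕ) : {R : Finset ℕ // R.card ≤ n} :=
  ⟨Finset.Icc 1 n, by simp [Nat.card_Icc]⟩

lemma cnt_Icc {n t : ℕ} (h : t ≤ n) : cnt (Finset.Icc 1 n) t = t := by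
  unfold cnt
  have : (Finset.Icc 1 n).filter (fun x => x ≤ t) = Finset.Icc 1 t := by
    ext x; simp [Finset.mem_Icc]; omega
  rw [this, Nat.card_Icc]
  omega

lemma crevSet_Icc {n p q : ℕ} (h1p : 1 ≤ p) (hq : q ≤ n) :
    crevSet p q (Finset.Icc 1 n) = Finset.Icc 1 n := by
  apply Finset.eq_of_subset_of_card_le
  · intro x hx
    rw [crevSet, Finset.mem_image] at hx
    obtain ⟨y, hy, rfl⟩ := hx
    rw [Finset.mem_Icc] at hy ⊢
    unfold crev; split_ifs <;> omega
  · rw [crevSet_card]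

lemma celt_Icc {n p q : ℕ} (hp : 1 ≤ p) (hpq : p < q) (hq : q ≤ n) :
    celt n p q (Finset.Icc 1 n) = PresentedGroup.of ⟨(p, q), ⟨hp, hpq, hq⟩⟩ := by
  unfold celt
  rw [cnt_Icc (show p - 1 ≤ n by omega), cnt_Icc hq,
    mkgen_eq (show p - 1 + 1 < q by omega) hq]
  exact congrArg _ (Subtype.ext (by simp [Prod.ext_iff]; omega))

lemma main_key (n k : ℕ) (x : CactusGroup n) :
    ∀ g : CactusGroup n, actionHom n k (phiHom n k x) (R0 n, g) = (R0 n, x * g) := by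
  refine QuotientGroup.induction_on x ?_
  intro w
  induction w using FreeGroup.induction_on with
  | C1 =>
    intro g
    show actionHom n k (phiHom n k 1) (R0 n, g) = (R0 n, 1 * g)
    simp
    rfl
  | of a =>
    intro g
    obtain ⟨⟨p, q⟩, ha⟩ := a
    show actionHom n k (phiHom n k (PresentedGroup.of ⟨(p, q), ha⟩)) (R0 n, g)
      = (R0 n, PresentedGroup.of ⟨(p, q), ha⟩ * g)
    have e1 : phiHom n k (PresentedGroup.of ⟨(p, q), ha⟩)
        = PresentedGroup.of ⟨(p, q), cactusSet_mono (Nat.le_add_right n k) ha⟩ :=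
      PresentedGroup.toGroup.of (phi_rels n k)
    have e2 : actionHom n k
          (PresentedGroup.of ⟨(p, q), cactusSet_mono (Nat.le_add_right n k) ha⟩)
        = genPerm n p q (cactusSet_mono (Nat.le_add_right n k) ha).1 :=
      PresentedGroup.toGroup.of (actionHom_rels n k)
    rw [e1, e2]
    show genFun n p q (R0 n, g) = (R0 n, PresentedGroup.of ⟨(p, q), ha⟩ * g)
    unfold genFun
    refine Prod.ext (Subtype.ext ?_) ?_
    · exact crevSet_Icc ha.1 ha.2.2
    · show celt n p q (Finset.Icc 1 n) * g = _
      rw [celt_Icc ha.1 ha.2.1 ha.2.2]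
  | inv_of a ih =>
    intro g
    have e : (PresentedGroup.mk (cactusRels (cactusSet n)) ((FreeGroup.of a)⁻¹))
        = PresentedGroup.mk (cactusRels (cactusSet n)) (FreeGroup.of a) := by
      rw [map_inv]
      exact inv_of a
    show actionHom n k
        (phiHom n k (PresentedGroup.mk (cactusRels (cactusSet n)) ((FreeGroup.of a)⁻¹)))
        (R0 n, g)
      = (R0 n, PresentedGroup.mk (cactusRels (cactusSet n)) ((FreeGroup.of a)⁻¹) * g)
    rw [e]
    exact ih g
  | mul u v ihu ihv =>
    intro g
    show actionHom n k
        (phiHom n k (PresentedGroup.mk (cactusRels (cactusSet n)) (u * v))) (R0 n, g)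
      = (R0 n, PresentedGroup.mk (cactusRels (cactusSet n)) (u * v) * g)
    rw [map_mul, map_mul, map_mul]
    erw [Equiv.Perm.mul_apply]
    have hv : actionHom n k
          (phiHom n k (PresentedGroup.mk (cactusRels (cactusSet n)) v)) (R0 n, g)
        = (R0 n, PresentedGroup.mk (cactusRels (cactusSet n)) v * g) := ihv g
    rw [hv]
    have hu : actionHom n k
          (phiHom n k (PresentedGroup.mk (cactusRels (cactusSet n)) u))
          (R0 n, PresentedGroup.mk (cactusRels (cactusSet n)) v * g)
        = (R0 n, PresentedGroup.mk (cactusRels (cactusSet n)) u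
            * (PresentedGroup.mk (cactusRels (cactusSet n)) v * g)) := ihu _
    rw [hu, mul_assoc]

end CactusAux


open CactusAux in
/-- For all `n ≥ 2` and `k ≥ 0`, the homomorphism `J_n → J_{n+k}`,
`s_{p,q} ↦ s_{p,q}`, is injective. -/
theorem cactus_embeds_in_bigger_cactus (n k : ℕ) (hn : 2 ≤ n) :
    ∃ φ : CactusGroup n →* CactusGroup (n + k),
      (∀ (pq : ℕ × ℕ) (h : pq ∈ cactusSet n),
        φ (PresentedGroup.of ⟨pq, h⟩) =
          PresentedGroup.of ⟨pq, cactusSet_mono (Nat.le_add_right n k) h⟩) ∧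
      Function.Injective φ := by
  refine ⟨phiHom n k, fun pq h => PresentedGroup.toGroup.of (phi_rels n k), ?_⟩
  intro x y hxy
  have h1 := main_key n k x 1
  have h2 := main_key n k y 1
  rw [hxy] at h1
  rw [h1] at h2
  have := congrArg Prod.snd h2
  simpa using this
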